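/- The maximum size of a set of mutually unbiased weighing matrices of order 8 and weight 4 is 14; that is, there exist 14 pairwise unbiased weighing matrices of order 8 and weight 4, and there do not exist 15 pairwise unbiased weighing matrices of order 8 and weight 4. -/

import Mathlib

open Matrix

/-- `W` is a weighing matrix of order `d` and weight `k`: a `d × d` real matrix with all
entries in `{-1, 0, 1}` such that `W * Wᵀ = k • 1`. -/
def IsWeighing {d : ℕ} (k : ℝ) (W : Matrix (Fin d) (Fin d) ℝ) : Prop :=
  (∀ i j, W i j = -1 ∨ W i j = 0 ∨ W i j = 1) ∧
    W * Wᵀ = k • (1 : Matrix (Fin d) (Fin d) ℝ)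

/-- A family of mutually unbiased weighing matrices of order `d` and weight `k`:
each member is a weighing matrix of weight `k`, and for distinct members
`(1/√k) • (Wᵢ * Wⱼᵀ)` is again a weighing matrix of weight `k`. -/
def MUWM {d f : ℕ} (k : ℝ) (W : Fin f → Matrix (Fin d) (Fin d) ℝ) : Prop :=
  (∀ i, IsWeighing k (W i)) ∧
    ∀ i j, i ≠ j → IsWeighing k ((Real.sqrt k)⁻¹ • (W i * (W j)ᵀ))

/-- A family of mutually quasi-unbiased weighing matrices for parameters `(d, k, l, a)`:
each member is a weighing matrix of weight `k`, and for distinct members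
`(1/√a) • (Wᵢ * Wⱼᵀ)` is a weighing matrix of weight `l`. -/
def MQUWM {d f : ℕ} (k l a : ℝ) (W : Fin f → Matrix (Fin d) (Fin d) ℝ) : Prop :=
  (∀ i, IsWeighing k (W i)) ∧
    ∀ i j, i ≠ j → IsWeighing l ((Real.sqrt a)⁻¹ • (W i * (W j)ᵀ))

open Finset



def wdat : Fin 14 → Fin 8 → Fin 8 → ℤ :=
  ![
    ![![1, 0, 1, 0, 1, 0, 1, 0], ![1, 0, 1, 0, -1, 0, -1, 0], ![1, 0, -1, 0, 1, 0, -1, 0], ![1, 0, -1, 0, -1, 0, 1, 0], ![0, 1, 0, 1, 0, 1, 0, 1], ![0, 1, 0, 1, 0, -1, 0, -1], ![0, 1, 0, -1, 0, 1, 0, -1], ![0, 1, 0, -1, 0, -1, 0, 1]],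
    ![![1, 0, 1, 0, 1, 0, -1, 0], ![1, 0, 1, 0, -1, 0, 1, 0], ![1, 0, -1, 0, 1, 0, 1, 0], ![1, 0, -1, 0, -1, 0, -1, 0], ![0, 1, 0, 1, 0, 1, 0, -1], ![0, 1, 0, 1, 0, -1, 0, 1], ![0, 1, 0, -1, 0, 1, 0, 1], ![0, 1, 0, -1, 0, -1, 0, -1]],
    ![![1, 1, 0, 0, 1, 1, 0, 0], ![1, 1, 0, 0, -1, -1, 0, 0], ![1, -1, 0, 0, 1, -1, 0, 0], ![1, -1, 0, 0, -1, 1, 0, 0], ![0, 0, 1, 1, 0, 0, 1, 1], ![0, 0, 1, 1, 0, 0, -1, -1], ![0, 0, 1, -1, 0, 0, 1, -1], ![0, 0, 1, -1, 0, 0, -1, 1]],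
    ![![1, 1, 0, 0, 1, -1, 0, 0], ![1, 1, 0, 0, -1, 1, 0, 0], ![1, -1, 0, 0, 1, 1, 0, 0], ![1, -1, 0, 0, -1, -1, 0, 0], ![0, 0, 1, 1, 0, 0, 1, -1], ![0, 0, 1, 1, 0, 0, -1, 1], ![0, 0, 1, -1, 0, 0, 1, 1], ![0, 0, 1, -1, 0, 0, -1, -1]],
    ![![1, 0, 0, 1, 1, 0, 0, 1], ![1, 0, 0, 1, -1, 0, 0, -1], ![1, 0, 0, -1, 1, 0, 0, -1], ![1, 0, 0, -1, -1, 0, 0, 1], ![0, 1, 1, 0, 0, 1, 1, 0], ![0, 1, 1, 0, 0, -1, -1, 0], ![0, 1, -1, 0, 0, 1, -1, 0], ![0, 1, -1, 0, 0, -1, 1, 0]],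
    ![![1, 0, 0, 1, 1, 0, 0, -1], ![1, 0, 0, 1, -1, 0, 0, 1], ![1, 0, 0, -1, 1, 0, 0, 1], ![1, 0, 0, -1, -1, 0, 0, -1], ![0, 1, 1, 0, 0, 1, -1, 0], ![0, 1, 1, 0, 0, -1, 1, 0], ![0, 1, -1, 0, 0, 1, 1, 0], ![0, 1, -1, 0, 0, -1, -1, 0]],
    ![![1, 1, 1, 1, 0, 0, 0, 0], ![1, 1, -1, -1, 0, 0, 0, 0], ![1, -1, 1, -1, 0, 0, 0, 0], ![1, -1, -1, 1, 0, 0, 0, 0], ![0, 0, 0, 0, 1, 1, 1, 1], ![0, 0, 0, 0, 1, 1, -1, -1], ![0, 0, 0, 0, 1, -1, 1, -1], ![0, 0, 0, 0, 1, -1, -1, 1]],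
    ![![1, 1, 1, -1, 0, 0, 0, 0], ![1, 1, -1, 1, 0, 0, 0, 0], ![1, -1, 1, 1, 0, 0, 0, 0], ![1, -1, -1, -1, 0, 0, 0, 0], ![0, 0, 0, 0, 1, 1, 1, -1], ![0, 0, 0, 0, 1, 1, -1, 1], ![0, 0, 0, 0, 1, -1, 1, 1], ![0, 0, 0, 0, 1, -1, -1, -1]],
    ![![1, 0, 1, 0, 0, 1, 0, 1], ![1, 0, 1, 0, 0, -1, 0, -1], ![1, 0, -1, 0, 0, 1, 0, -1], ![1, 0, -1, 0, 0, -1, 0, 1], ![0, 1, 0, 1, 1, 0, 1, 0], ![0, 1, 0, 1, -1, 0, -1, 0], ![0, 1, 0, -1, 1, 0, -1, 0], ![0, 1, 0, -1, -1, 0, 1, 0]],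
    ![![1, 0, 1, 0, 0, 1, 0, -1], ![1, 0, 1, 0, 0, -1, 0, 1], ![1, 0, -1, 0, 0, 1, 0, 1], ![1, 0, -1, 0, 0, -1, 0, -1], ![0, 1, 0, 1, 1, 0, -1, 0], ![0, 1, 0, 1, -1, 0, 1, 0], ![0, 1, 0, -1, 1, 0, 1, 0], ![0, 1, 0, -1, -1, 0, -1, 0]],
    ![![1, 1, 0, 0, 0, 0, 1, 1], ![1, 1, 0, 0, 0, 0, -1, -1], ![1, -1, 0, 0, 0, 0, 1, -1], ![1, -1, 0, 0, 0, 0, -1, 1], ![0, 0, 1, 1, 1, 1, 0, 0], ![0, 0, 1, 1, -1, -1, 0, 0], ![0, 0, 1, -1, 1, -1, 0, 0], ![0, 0, 1, -1, -1, 1, 0, 0]],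
    ![![1, 1, 0, 0, 0, 0, 1, -1], ![1, 1, 0, 0, 0, 0, -1, 1], ![1, -1, 0, 0, 0, 0, 1, 1], ![1, -1, 0, 0, 0, 0, -1, -1], ![0, 0, 1, 1, 1, -1, 0, 0], ![0, 0, 1, 1, -1, 1, 0, 0], ![0, 0, 1, -1, 1, 1, 0, 0], ![0, 0, 1, -1, -1, -1, 0, 0]],
    ![![1, 0, 0, 1, 0, 1, 1, 0], ![1, 0, 0, 1, 0, -1, -1, 0], ![1, 0, 0, -1, 0, 1, -1, 0], ![1, 0, 0, -1, 0, -1, 1, 0], ![0, 1, 1, 0, 1, 0, 0, 1], ![0, 1, 1, 0, -1, 0, 0, -1], ![0, 1, -1, 0, 1, 0, 0, -1], ![0, 1, -1, 0, -1, 0, 0, 1]],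
    ![![1, 0, 0, 1, 0, 1, -1, 0], ![1, 0, 0, 1, 0, -1, 1, 0], ![1, 0, 0, -1, 0, 1, 1, 0], ![1, 0, 0, -1, 0, -1, -1, 0], ![0, 1, 1, 0, 1, 0, 0, -1], ![0, 1, 1, 0, -1, 0, 0, 1], ![0, 1, -1, 0, 1, 0, 0, 1], ![0, 1, -1, 0, -1, 0, 0, -1]]
  ]

def idot (v w : Fin 8 → ℤ) : ℤ :=
  v 0 * w 0 + v 1 * w 1 + v 2 * w 2 + v 3 * w 3 + v 4 * w 4 + v 5 * w 5 + v 6 * w 6 + v 7 * w 7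

lemma idot_eq (v w : Fin 8 → ℤ) : idot v w = ∑ k, v k * w k := by
  simp [idot, Fin.sum_univ_eight]

set_option maxHeartbeats 1000000 in
lemma wdat_entries : ∀ a i j, wdat a i j = -1 ∨ wdat a i j = 0 ∨ wdat a i j = 1 := by decide

set_option maxHeartbeats 2000000 in
lemma wdat_self : ∀ (a : Fin 14) (i j : Fin 8),
    idot (wdat a i) (wdat a j) = if i = j then 4 else 0 := by decide

set_option maxHeartbeats 8000000 in
lemma wdat_cross : ∀ a b : Fin 14, a ≠ b → ∀ i j : Fin 8,
    idot (wdat a i) (wdat b j) = -2 ∨ idot (wdat a i) (wdat b j) = 0 ∨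
      idot (wdat a i) (wdat b j) = 2 := by decide

noncomputable def Wfam : Fin 14 → Matrix (Fin 8) (Fin 8) ℝ :=
  fun a => Matrix.of fun i j => ((wdat a i j : ℤ) : ℝ)

lemma sqrt_four : Real.sqrt 4 = 2 := by
  rw [show (4:ℝ) = 2 ^ 2 by norm_num, Real.sqrt_sq (by norm_num : (0:ℝ) ≤ 2)]

lemma Wfam_mul_apply (a b : Fin 14) (i j : Fin 8) :
    (Wfam a * (Wfam b)ᵀ) i j = ((idot (wdat a i) (wdat b j) : ℤ) : ℝ) := by
  rw [Matrix.mul_apply, idot_eq]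
  push_cast
  exact Finset.sum_congr rfl fun k _ => rfl

lemma Wfam_orth (a : Fin 14) : Wfam a * (Wfam a)ᵀ = (4:ℝ) • 1 := by
  ext i j
  rw [Wfam_mul_apply, wdat_self a i j]
  by_cases h : i = j <;>
    simp [h, Matrix.smul_apply, Matrix.one_apply]

/-- general fact: if `A Aᵀ = 4•1` and `B Bᵀ = 4•1` then `(2⁻¹ • (A Bᵀ))` is "orthogonal". -/
lemma half_prod_orth {A B : Matrix (Fin 8) (Fin 8) ℝ}
    (hA : A * Aᵀ = (4:ℝ) • 1) (hB : B * Bᵀ = (4:ℝ) • 1) :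
    ((2:ℝ)⁻¹ • (A * Bᵀ)) * ((2:ℝ)⁻¹ • (A * Bᵀ))ᵀ = (4:ℝ) • 1 := by
  have hBt : Bᵀ * B = (4:ℝ) • 1 := by
    have h1 : B * ((4:ℝ)⁻¹ • Bᵀ) = 1 := by
      rw [Matrix.mul_smul, hB, smul_smul]; norm_num
    have h2 : ((4:ℝ)⁻¹ • Bᵀ) * B = 1 := mul_eq_one_comm.mp h1
    calc Bᵀ * B = (4:ℝ) • (((4:ℝ)⁻¹ • Bᵀ) * B) := by
          rw [Matrix.smul_mul, smul_smul]; norm_num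
    _ = (4:ℝ) • 1 := by rw [h2]
  rw [Matrix.transpose_smul, Matrix.transpose_mul, Matrix.transpose_transpose]
  rw [Matrix.smul_mul, Matrix.mul_smul, smul_smul]
  rw [Matrix.mul_assoc, ← Matrix.mul_assoc Bᵀ B Aᵀ, hBt, Matrix.smul_mul, Matrix.mul_smul,
    Matrix.one_mul, hA]
  rw [smul_smul, smul_smul]
  norm_num


abbrev V8 := Fin 8 → ZMod 2

noncomputable def dotF : LinearMap.BilinForm (ZMod 2) V8 :=
  LinearMap.mk₂ (ZMod 2) (fun x y => ∑ k, x k * y k)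
    (by intro x x' y; simp [add_mul, Finset.sum_add_distrib])
    (by intro c x y; simp [Finset.mul_sum, mul_assoc])
    (by intro x y y'; simp [mul_add, Finset.sum_add_distrib])
    (by intro c x y; simp [Finset.mul_sum]; exact Finset.sum_congr rfl fun k _ => by ring)

lemma dotF_apply (x y : V8) : dotF x y = ∑ k, x k * y k := rfl

lemma dotF_nondeg : dotF.Nondegenerate := by
  refine ⟨?_, ?_⟩ <;>
  ( intro x hx
    funext k
    have := hx (Pi.single k 1)
    rw [dotF_apply, Finset.sum_eq_single k] at this
    · simpa using this
    · intro b _ hb; simp [Pi.single_apply, hb]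
    · simp)

lemma zmod2_cases (a : ZMod 2) : a = 0 ∨ a = 1 := by revert a; decide

lemma code_bound (T : Finset V8)
    (hw : ∀ t ∈ T, (univ.filter fun k => t k = 1).card = 4)
    (ho : ∀ s ∈ T, ∀ t ∈ T, dotF s t = 0) :
    T.card ≤ 14 := by
  classical
  set C : Submodule (ZMod 2) V8 := Submodule.span (ZMod 2) (T : Set V8) with hC
  -- isotropy
  have hiso : ∀ x ∈ C, ∀ y ∈ C, dotF x y = 0 := by
    intro x hx y hy
    induction hx, hy using Submodule.span_induction₂ with
    | mem_mem a b ha hb => exact ho a ha b hb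
    | zero_left y hy => simp
    | zero_right x hx => simp
    | add_left x y z hx hy hz h1 h2 => simp [h1, h2]
    | add_right x y z hx hy hz h1 h2 => simp [h1, h2]
    | smul_left r x y hx hy h => simp [h]
    | smul_right r x y hx hy h => simp [h]
  -- dimension bound
  have hrank : Module.finrank (ZMod 2) C ≤ 4 := by
    set φ : V8 →ₗ[ZMod 2] Module.Dual (ZMod 2) C :=
      (Submodule.dualRestrict C).comp (dotF.toDual dotF_nondeg).toLinearMap with hφ
    have hsurj : Function.Surjective φ := by
      exact (Subspace.dualRestrict_surjective).comp
        (LinearEquiv.surjective _)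
    have hker : C ≤ LinearMap.ker φ := by
      intro x hx
      simp only [LinearMap.mem_ker]
      ext ⟨y, hy⟩
      simpa [hφ, LinearMap.BilinForm.toDual_def] using hiso x hx y hy
    have h1 : Module.finrank (ZMod 2) (LinearMap.range φ) = Module.finrank (ZMod 2) C := by
      rw [LinearMap.range_eq_top.mpr hsurj]
      simpa using Subspace.dual_finrank_eq (W := C)
    have h2 := LinearMap.finrank_range_add_finrank_ker φ
    have h3 : Module.finrank (ZMod 2) C ≤ Module.finrank (ZMod 2) (LinearMap.ker φ) :=
      Submodule.finrank_mono hker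
    have h4 : Module.finrank (ZMod 2) V8 = 8 := by
      simp [Module.finrank_pi]
    omega
  -- cardinality of C
  have hcardC : Fintype.card C ≤ 16 := by
    have := Module.card_eq_pow_finrank (K := ZMod 2) (V := C)
    rw [this, ZMod.card]
    calc (2:ℕ) ^ Module.finrank (ZMod 2) C ≤ 2 ^ 4 := Nat.pow_le_pow_right (by norm_num) hrank
    _ = 16 := by norm_num
  -- final counting
  by_contra hlt
  push_neg at hlt
  have hvv : ∀ v : V8, v + v = 0 := by
    intro v; funext k
    show v k + v k = 0
    rcases zmod2_cases (v k) with h | h <;> rw [h] <;> decide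
  have h0T : (0 : V8) ∉ T := by
    intro h0
    have := hw 0 h0
    simp [Finset.filter_eq_empty_iff] at this
  set C' : Finset V8 := univ.filter (fun x : V8 => x ∈ C) with hC'
  have h0C' : (0 : V8) ∈ C' := by simp [hC', C.zero_mem]
  have hTsub : T ⊆ C'.erase 0 := by
    intro t ht
    refine Finset.mem_erase.mpr ⟨fun h => h0T (h ▸ ht), ?_⟩
    simp only [hC', Finset.mem_filter, Finset.mem_univ, true_and]
    exact Submodule.subset_span ht
  have hcardC' : C'.card = Fintype.card C := (Fintype.card_subtype _).symm
  have hle16 : C'.card ≤ 16 := hcardC' ▸ hcardC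
  have hT15 : T.card ≤ C'.card - 1 :=
    le_trans (Finset.card_le_card hTsub) (le_of_eq (Finset.card_erase_of_mem h0C'))
  have hC'16 : C'.card = 16 := by omega
  have hT : T = C'.erase 0 :=
    Finset.eq_of_subset_of_card_le hTsub (by rw [Finset.card_erase_of_mem h0C', hC'16]; omega)
  have hN1 : ∑ x ∈ C', (univ.filter fun k => x k = 1).card = 60 := by
    have hins : C' = insert (0:V8) T := by rw [hT, Finset.insert_erase h0C']
    rw [hins, Finset.sum_insert h0T]
    have : ∑ x ∈ T, (univ.filter fun k => x k = 1).card = ∑ _x ∈ T, 4 :=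
      Finset.sum_congr rfl hw
    rw [this, Finset.sum_const]
    have hTcard : T.card = 15 := by
      rw [hT, Finset.card_erase_of_mem h0C', hC'16]
    rw [hTcard]
    simp [Finset.filter_eq_empty_iff]
  have hN2 : (8:ℕ) ∣ ∑ x ∈ C', (univ.filter fun k => x k = 1).card := by
    have hcomm : ∑ x ∈ C', (univ.filter fun k => x k = 1).card
         = ∑ k : Fin 8, (C'.filter fun x => x k = 1).card := by
      simp_rw [Finset.card_filter]
      exact Finset.sum_comm
    rw [hcomm]
    apply Finset.dvd_sum
    intro k _
    by_cases hex : ∃ x0 ∈ C', x0 k = 1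
    · obtain ⟨x0, hx0C, hx0k⟩ := hex
      have hx0mem : x0 ∈ C := by simpa [hC'] using hx0C
      have hmemC' : ∀ a ∈ C', a + x0 ∈ C' := by
        intro a ha
        simp only [hC', Finset.mem_filter, Finset.mem_univ, true_and] at ha ⊢
        exact C.add_mem ha hx0mem
      have hbij : (C'.filter fun x => x k = 1).card = (C'.filter fun x => ¬ x k = 1).card := by
        apply Finset.card_bij' (fun a _ => a + x0) (fun a _ => a + x0)
        · intro a ha
          simp only [Finset.mem_filter] at ha ⊢
          refine ⟨hmemC' a ha.1, ?_⟩
          show ¬ (a k + x0 k = 1)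
          rw [ha.2, hx0k]; decide
        · intro a ha
          simp only [Finset.mem_filter] at ha ⊢
          refine ⟨hmemC' a ha.1, ?_⟩
          show a k + x0 k = 1
          rcases zmod2_cases (a k) with h | h
          · rw [h, hx0k]; decide
          · exact absurd h ha.2
        · intro a _
          rw [add_assoc, hvv x0, add_zero]
        · intro a _
          rw [add_assoc, hvv x0, add_zero]
      have hsplit := Finset.card_filter_add_card_filter_not (s := C')
        (p := fun x : V8 => x k = 1)
      have hsplit' : (C'.filter fun x => x k = 1).card + (C'.filter fun x => ¬ x k = 1).card
          = C'.card := by simpa using hsplit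
      have h8 : (C'.filter fun x => x k = 1).card = 8 := by rw [← hbij, hC'16] at hsplit'; linarith
      rw [h8]
    · push_neg at hex
      have : (C'.filter fun x => x k = 1) = ∅ :=
        Finset.filter_eq_empty_iff.mpr (fun x hx => hex x hx)
      simp [this]
  rw [hN1] at hN2
  norm_num at hN2


lemma exists14 : ∃ W : Fin 14 → Matrix (Fin 8) (Fin 8) ℝ, MUWM (4:ℝ) W := by
  refine ⟨Wfam, fun a => ⟨?_, Wfam_orth a⟩, fun a b hab => ?_⟩
  · intro i j
    rcases wdat_entries a i j with h | h | h
    · left; simp [Wfam, h]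
    · right; left; simp [Wfam, h]
    · right; right; simp [Wfam, h]
  · rw [sqrt_four]
    refine ⟨?_, half_prod_orth (Wfam_orth a) (Wfam_orth b)⟩
    intro i j
    have hm := Wfam_mul_apply a b i j
    rcases wdat_cross a b hab i j with h | h | h
    · left; rw [Matrix.smul_apply, hm, h]; norm_num
    · right; left; rw [Matrix.smul_apply, hm, h]; norm_num
    · right; right; rw [Matrix.smul_apply, hm, h]; norm_num

open Matrix in
lemma not15 : ¬∃ W : Fin 15 → Matrix (Fin 8) (Fin 8) ℝ, MUWM (4 : ℝ) W := by
  classical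
  rintro ⟨W, hWi, hWij⟩
  have hent : ∀ a i k, W a i k = -1 ∨ W a i k = 0 ∨ W a i k = 1 := fun a => (hWi a).1
  -- integer entries
  set z : Fin 15 → Fin 8 → Fin 8 → ℤ :=
    fun a i k => if W a i k = 1 then 1 else if W a i k = -1 then -1 else 0 with hzdef
  have hz : ∀ a i k, ((z a i k : ℤ) : ℝ) = W a i k := by
    intro a i k
    simp only [hzdef]
    rcases hent a i k with h | h | h <;> rw [h]
    · rw [if_neg (by norm_num), if_pos rfl]; norm_num
    · rw [if_neg (by norm_num), if_neg (by norm_num)]; norm_num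
    · rw [if_pos rfl]; norm_num
  have hze : ∀ a i k, z a i k = -1 ∨ z a i k = 0 ∨ z a i k = 1 := by
    intro a i k
    simp only [hzdef]
    rcases hent a i k with h | h | h <;> rw [h]
    · left; rw [if_neg (by norm_num), if_pos rfl]
    · right; left; rw [if_neg (by norm_num), if_neg (by norm_num)]
    · right; right; rw [if_pos rfl]
  -- product entries
  have hdotR : ∀ a b i j, (W a * (W b)ᵀ) i j = ((∑ k, z a i k * z b j k : ℤ) : ℝ) := by
    intro a b i j
    rw [Matrix.mul_apply]
    push_cast [hz]
    exact Finset.sum_congr rfl fun k _ => rfl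
  -- same matrix dot products
  have hself : ∀ a i j, (∑ k, z a i k * z a j k) = if i = j then 4 else 0 := by
    intro a i j
    have h1 : (W a * (W a)ᵀ) i j = if i = j then (4:ℝ) else 0 := by
      rw [(hWi a).2]
      by_cases h : i = j <;> simp [h, Matrix.smul_apply, Matrix.one_apply]
    rw [hdotR] at h1
    by_cases h : i = j <;> simp only [h, if_true, if_false] at h1 ⊢ <;> exact_mod_cast h1
  -- distinct matrices dot products
  have hcross : ∀ a b, a ≠ b → ∀ i j,
      (∑ k, z a i k * z b j k) = -2 ∨ (∑ k, z a i k * z b j k) = 0 ∨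
        (∑ k, z a i k * z b j k) = 2 := by
    intro a b hab i j
    have h1 := (hWij a b hab).1 i j
    rw [sqrt_four, Matrix.smul_apply, hdotR, smul_eq_mul] at h1
    rcases h1 with h | h | h
    · left
      have h3 : ((∑ k, z a i k * z b j k : ℤ) : ℝ) = -2 := by linarith
      exact_mod_cast h3
    · right; left
      have h3 : ((∑ k, z a i k * z b j k : ℤ) : ℝ) = 0 := by linarith
      exact_mod_cast h3
    · right; right
      have h3 : ((∑ k, z a i k * z b j k : ℤ) : ℝ) = 2 := by linarith
      exact_mod_cast h3
  -- combined pairwise fact on row indices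
  have hpair : ∀ x y : Fin 15 × Fin 8, x ≠ y →
      (∑ k, z x.1 x.2 k * z y.1 y.2 k) = -2 ∨ (∑ k, z x.1 x.2 k * z y.1 y.2 k) = 0 ∨
        (∑ k, z x.1 x.2 k * z y.1 y.2 k) = 2 := by
    rintro ⟨a, i⟩ ⟨b, j⟩ hxy
    by_cases hab : a = b
    · subst hab
      have hij : i ≠ j := fun h => hxy (by rw [h])
      right; left
      rw [hself a i j, if_neg hij]
    · exact hcross a b hab i j
  -- weights
  have hwt : ∀ a i, (univ.filter fun k => z a i k ≠ 0).card = 4 := by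
    intro a i
    have h1 := hself a i i
    rw [if_pos rfl] at h1
    have h2 : (∑ k, z a i k * z a i k) = ((univ.filter fun k => z a i k ≠ 0).card : ℤ) := by
      rw [Finset.card_filter]
      push_cast
      refine Finset.sum_congr rfl fun k _ => ?_
      rcases hze a i k with h | h | h <;> rw [h] <;> norm_num
    rw [h2] at h1
    exact_mod_cast h1
  -- reduction mod 2
  set u : (Fin 15 × Fin 8) → V8 := fun x k => ((z x.1 x.2 k : ℤ) : ZMod 2) with hudef
  have huone : ∀ x k, u x k = 1 ↔ z x.1 x.2 k ≠ 0 := by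
    intro x k
    have h0 : u x k = ((z x.1 x.2 k : ℤ) : ZMod 2) := rfl
    rw [h0]
    rcases hze x.1 x.2 k with h | h | h <;> rw [h] <;> decide
  set T : Finset V8 := Finset.image u univ with hTdef
  have hTw : ∀ t ∈ T, (univ.filter fun k => t k = 1).card = 4 := by
    intro t ht
    obtain ⟨x, _, rfl⟩ := Finset.mem_image.mp ht
    rw [← hwt x.1 x.2]
    exact congrArg Finset.card (Finset.filter_congr fun k _ => by rw [huone])
  have hTo : ∀ s ∈ T, ∀ t ∈ T, dotF s t = 0 := by
    intro s hs t ht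
    obtain ⟨x, _, rfl⟩ := Finset.mem_image.mp hs
    obtain ⟨y, _, rfl⟩ := Finset.mem_image.mp ht
    rw [dotF_apply]
    have hcast : ∑ k, u x k * u y k = ((∑ k, z x.1 x.2 k * z y.1 y.2 k : ℤ) : ZMod 2) := by
      push_cast
      rfl
    rw [hcast]
    by_cases hxy : x = y
    · subst hxy
      rw [hself x.1 x.2 x.2, if_pos rfl]
      decide
    · rcases hpair x y hxy with h | h | h <;> rw [h] <;> decide
  have hT14 : T.card ≤ 14 := code_bound T hTw hTo
  -- fiber bound
  have hfib : ∀ t ∈ T, (univ.filter fun x : Fin 15 × Fin 8 => u x = t).card ≤ 8 := by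
    intro t ht
    set s : Finset (Fin 8) := univ.filter fun k => t k = 1 with hsdef
    have hs4 : s.card = 4 := hTw t ht
    have hsne : s.Nonempty := Finset.card_pos.mp (by rw [hs4]; norm_num)
    set k0 : Fin 8 := s.min' hsne with hk0def
    have hk0 : k0 ∈ s := s.min'_mem hsne
    -- for x in the fiber, support of z x is s
    have hsupp : ∀ x : Fin 15 × Fin 8, u x = t → ∀ k, z x.1 x.2 k ≠ 0 ↔ k ∈ s := by
      intro x hx k
      rw [← huone x k, hx, hsdef]
      simp
    have hsgn : ∀ x : Fin 15 × Fin 8, u x = t → ∀ k ∈ s,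
        z x.1 x.2 k = -1 ∨ z x.1 x.2 k = 1 := by
      intro x hx k hk
      have hne : z x.1 x.2 k ≠ 0 := (hsupp x hx k).mpr hk
      rcases hze x.1 x.2 k with h | h | h
      · exact Or.inl h
      · exact absurd h hne
      · exact Or.inr h
    -- injection into subsets of s.erase k0
    have hinj : Set.InjOn
        (fun x : Fin 15 × Fin 8 => (s.erase k0).filter fun k => z x.1 x.2 k0 * z x.1 x.2 k = 1)
        (univ.filter fun x : Fin 15 × Fin 8 => u x = t) := by
      intro x hx y hy hAeq0
      have hAeq : ((s.erase k0).filter fun k => z x.1 x.2 k0 * z x.1 x.2 k = 1)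
          = ((s.erase k0).filter fun k => z y.1 y.2 k0 * z y.1 y.2 k = 1) := hAeq0
      by_contra hxy
      have hxt : u x = t := (Finset.mem_filter.mp hx).2
      have hyt : u y = t := (Finset.mem_filter.mp hy).2
      -- the canonical forms agree
      have hcanon : ∀ k, z x.1 x.2 k0 * z x.1 x.2 k = z y.1 y.2 k0 * z y.1 y.2 k := by
        intro k
        by_cases hk : k ∈ s
        · by_cases hkk0 : k = k0
          · rw [hkk0]
            rcases hsgn x hxt k0 hk0 with h | h <;> rcases hsgn y hyt k0 hk0 with h' | h' <;>
              rw [h, h'] <;> norm_num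
          · have hke : k ∈ s.erase k0 := Finset.mem_erase.mpr ⟨hkk0, hk⟩
            have hmemx : (z x.1 x.2 k0 * z x.1 x.2 k = 1) ↔ (z y.1 y.2 k0 * z y.1 y.2 k = 1) := by
              constructor
              · intro h
                have : k ∈ (s.erase k0).filter fun k => z y.1 y.2 k0 * z y.1 y.2 k = 1 := by
                  rw [← hAeq]; exact Finset.mem_filter.mpr ⟨hke, h⟩
                exact (Finset.mem_filter.mp this).2
              · intro h
                have : k ∈ (s.erase k0).filter fun k => z x.1 x.2 k0 * z x.1 x.2 k = 1 := by
                  rw [hAeq]; exact Finset.mem_filter.mpr ⟨hke, h⟩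
                exact (Finset.mem_filter.mp this).2
            rcases hsgn x hxt k0 hk0 with e1 | e1 <;> rcases hsgn x hxt k hk with e2 | e2 <;>
              rcases hsgn y hyt k0 hk0 with e3 | e3 <;> rcases hsgn y hyt k hk with e4 | e4 <;>
              rw [e1, e2, e3, e4] <;> rw [e1, e2, e3, e4] at hmemx <;> norm_num at hmemx <;> norm_num
        · have h1 : z x.1 x.2 k = 0 := by
            by_contra h; exact hk ((hsupp x hxt k).mp h)
          have h2 : z y.1 y.2 k = 0 := by
            by_contra h; exact hk ((hsupp y hyt k).mp h)
          rw [h1, h2, mul_zero, mul_zero]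
      -- derive contradiction with hpair
      have hprod : ∀ k, z x.1 x.2 k * z y.1 y.2 k
          = (z x.1 x.2 k0 * z y.1 y.2 k0) * (if k ∈ s then 1 else 0) := by
        intro k
        by_cases hk : k ∈ s
        · rw [if_pos hk, mul_one]
          have h1 := hcanon k
          rcases hsgn x hxt k0 hk0 with e1 | e1 <;> rcases hsgn y hyt k0 hk0 with e3 | e3 <;>
            rcases hsgn y hyt k hk with e4 | e4 <;>
            rw [e1, e3, e4] at h1 ⊢ <;> linarith
        · rw [if_neg hk]
          have h1 : z x.1 x.2 k = 0 := by
            by_contra h; exact hk ((hsupp x hxt k).mp h)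
          rw [h1, zero_mul, mul_zero]
      have hsum : (∑ k, z x.1 x.2 k * z y.1 y.2 k)
          = (z x.1 x.2 k0 * z y.1 y.2 k0) * 4 := by
        rw [Finset.sum_congr rfl fun k _ => hprod k, ← Finset.mul_sum]
        congr 1
        rw [Finset.sum_ite_mem, Finset.univ_inter, Finset.sum_const, hs4]
        norm_num
      have hp := hpair x y hxy
      rw [hsum] at hp
      rcases hsgn x hxt k0 hk0 with e1 | e1 <;> rcases hsgn y hyt k0 hk0 with e3 | e3 <;>
        rw [e1, e3] at hp <;> norm_num at hp
    have hmaps : ∀ x ∈ univ.filter fun x : Fin 15 × Fin 8 => u x = t,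
        ((s.erase k0).filter fun k => z x.1 x.2 k0 * z x.1 x.2 k = 1) ∈ (s.erase k0).powerset :=
      fun x _ => Finset.mem_powerset.mpr (Finset.filter_subset _ _)
    have hcard := Finset.card_le_card_of_injOn _ hmaps hinj
    have hpow : (s.erase k0).powerset.card = 8 := by
      rw [Finset.card_powerset, Finset.card_erase_of_mem hk0, hs4]
      norm_num
    rw [hpow] at hcard
    exact hcard
  -- final count
  have hcount := Finset.card_eq_sum_card_fiberwise
    (f := u) (s := (univ : Finset (Fin 15 × Fin 8))) (t := T)
    (fun x _ => Finset.mem_image_of_mem u (Finset.mem_univ x))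
  have h120 : (univ : Finset (Fin 15 × Fin 8)).card = 120 := by simp
  have hsum : ∑ t ∈ T, (univ.filter fun x : Fin 15 × Fin 8 => u x = t).card ≤ 14 * 8 := by
    calc ∑ t ∈ T, (univ.filter fun x : Fin 15 × Fin 8 => u x = t).card
        ≤ ∑ _t ∈ T, 8 := Finset.sum_le_sum hfib
    _ = T.card * 8 := by rw [Finset.sum_const, smul_eq_mul]
    _ ≤ 14 * 8 := Nat.mul_le_mul_right 8 hT14
  rw [h120] at hcount
  rw [← hcount] at hsum
  norm_num at hsum

/-- the maximum size of a set of mutually unbiased weighing matrices of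
order `8` and weight `4` is `14`. -/
theorem stmt15 :
    (∃ W : Fin 14 → Matrix (Fin 8) (Fin 8) ℝ, MUWM (4 : ℝ) W) ∧
    ¬∃ W : Fin 15 → Matrix (Fin 8) (Fin 8) ℝ, MUWM (4 : ℝ) W := by
  exact ⟨exists14, not15⟩
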